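/- Let P be a regular Markov chain on state space [N] with stationary distribution π and spectral expansion λ. Let m ≥ 1, ℓ ≥ 0, t > 0, and let H_1,…,H_N ∈ ℂ^{m×m} satisfy ‖H_i‖₂ ≤ ℓ for all i and Σ_{i∈[N]} π_i H_i = 0. Let E be the block-diagonal matrix with i-th diagonal block exp(tH_i), let P̃ := P ⊗ I_m, and assume λ·exp(tℓ) < 1. Let z_0 ∈ U (so z_0^⊥ = 0) and define z_i := P̃ᵀ E* z_{i−1} for i ≥ 1. Then for every i ≥ 1, ‖z_i^∥‖_π ≤ ( (exp(tℓ) − tℓ) + λ(exp(tℓ)−1)² / (1 − λ·exp(tℓ)) ) · max_{0 ≤ j < i} ‖z_j^∥‖_π. -/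

import Mathlib

open scoped BigOperators Kronecker ComplexOrder
open Matrix

/-- A (row-stochastic) Markov chain on a finite state space: nonnegative entries, rows sum to 1. -/
def IsMarkov {S : Type*} [Fintype S] (P : Matrix S S ℝ) : Prop :=
  (∀ i j, 0 ≤ P i j) ∧ ∀ i, ∑ j, P i j = 1

/-- A Markov chain is regular if some positive power has all entries strictly positive. -/
def IsRegularMC {S : Type*} [Fintype S] [DecidableEq S] (P : Matrix S S ℝ) : Prop :=
  ∃ k : ℕ, 0 < k ∧ ∀ i j, 0 < (P ^ k) i j

/-- `π` is a stationary distribution of `P`: strictly positive entries, sums to 1, `πᵀ P = πᵀ`. -/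
def IsStationaryMC {S : Type*} [Fintype S] (P : Matrix S S ℝ) (π : S → ℝ) : Prop :=
  (∀ i, 0 < π i) ∧ (∑ i, π i = 1) ∧ ∀ j, ∑ i, π i * P i j = π j

/-- A probability vector. -/
def IsProbVec {S : Type*} [Fintype S] (φ : S → ℝ) : Prop :=
  (∀ i, 0 ≤ φ i) ∧ ∑ i, φ i = 1

/-- The `π`-norm of a real vector `φ`: `‖φ‖_π = sqrt (∑ i, φ i ^ 2 / π i)`. -/
noncomputable def piNormR {S : Type*} [Fintype S] (π φ : S → ℝ) : ℝ :=
  Real.sqrt (∑ i, φ i ^ 2 / π i)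

/-- The `π`-inner product `⟨x, y⟩_π = y* Π⁻¹ x` on `ℂ^S`. -/
noncomputable def piInner {S : Type*} [Fintype S] (π : S → ℝ) (x y : S → ℂ) : ℂ :=
  ∑ i, (starRingEnd ℂ) (y i) * x i / (π i : ℂ)

/-- The `π`-norm of a complex vector. -/
noncomputable def piNorm {S : Type*} [Fintype S] (π : S → ℝ) (x : S → ℂ) : ℝ :=
  Real.sqrt (∑ i, ‖x i‖ ^ 2 / π i)

/-- The spectral expansion `λ(P)`: the supremum of `‖Pᵀ x‖_π / ‖x‖_π` over nonzero `x`
with `⟨x, π⟩_π = 0`. -/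
noncomputable def specExp {S : Type*} [Fintype S] (P : Matrix S S ℝ) (π : S → ℝ) : ℝ :=
  sSup {r : ℝ | ∃ x : S → ℂ, x ≠ 0 ∧ piInner π x (fun i => (π i : ℂ)) = 0 ∧
    r = piNorm π ((P.map Complex.ofReal)ᵀ *ᵥ x) / piNorm π x}

/-- The spectral (operator 2-)norm of a matrix. -/
noncomputable def spectralNormMat {𝕜 : Type*} [RCLike 𝕜] {m n : Type*} [Fintype m] [Fintype n]
    (A : Matrix m n 𝕜) : ℝ :=
  sSup {r : ℝ | ∃ x : n → 𝕜, x ≠ 0 ∧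
    r = Real.sqrt (∑ i, ‖(A *ᵥ x) i‖ ^ 2) / Real.sqrt (∑ j, ‖x j‖ ^ 2)}

/-- The probability that a `k`-step random walk on `P` started from `φ` follows the
trajectory `v`, i.e. `φ (v 1) * ∏ j, P (v j) (v (j+1))`. -/
noncomputable def walkWeight {S : Type*} [Fintype S] (P : Matrix S S ℝ) (φ : S → ℝ)
    {k : ℕ} (v : Fin k → S) : ℝ :=
  if h : 0 < k then
    φ (v ⟨0, h⟩) * ∏ j : Fin (k - 1),
      P (v ⟨(j : ℕ), by have := j.isLt; omega⟩) (v ⟨(j : ℕ) + 1, by have := j.isLt; omega⟩)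
  else 0

/-- The probability of an event `E` under a `k`-step random walk on `P` started from `φ`. -/
noncomputable def walkProb {S : Type*} [Fintype S] (P : Matrix S S ℝ) (φ : S → ℝ)
    {k : ℕ} (E : Set (Fin k → S)) : ℝ :=
  ∑ v : Fin k → S, E.indicator (fun u => walkWeight P φ u) v

/-- The matrix exponential, `exp A = ∑ A^k / k!`. -/
noncomputable def mexp {m : Type*} [Fintype m] [DecidableEq m]
    (A : Matrix m m ℂ) : Matrix m m ℂ :=
  ∑' k : ℕ, ((k.factorial : ℂ)⁻¹) • A ^ k

/-- The block-diagonal matrix `diag (M 1, …, M N)`. -/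
def blockDiag' {S m : Type*} [DecidableEq S] (M : S → Matrix m m ℂ) :
    Matrix (S × m) (S × m) ℂ :=
  Matrix.of fun p q => if p.1 = q.1 then M p.1 p.2 q.2 else 0

/-- The `π`-inner product `⟨x, y⟩_π = y* (Π⁻¹ ⊗ I_m) x` on `ℂ^{N m}`. -/
noncomputable def piInnerKron {N m : ℕ} (π : Fin N → ℝ) (x y : Fin N × Fin m → ℂ) : ℂ :=
  ∑ p, (starRingEnd ℂ) (y p) * x p / (π p.1 : ℂ)

/-- The `π`-norm on `ℂ^{N m}`. -/
noncomputable def piNormKron {N m : ℕ} (π : Fin N → ℝ) (x : Fin N × Fin m → ℂ) : ℝ :=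
  Real.sqrt (∑ p, ‖x p‖ ^ 2 / π p.1)

/-- Membership in the subspace `U = {π ⊗ w : w ∈ ℂ^m}`. -/
def memU {N m : ℕ} (π : Fin N → ℝ) (x : Fin N × Fin m → ℂ) : Prop :=
  ∃ w : Fin m → ℂ, ∀ p, x p = (π p.1 : ℂ) * w p.2

/-- `π`-orthogonality to the subspace `U = {π ⊗ w : w ∈ ℂ^m}`. -/
noncomputable def perpU {N m : ℕ} (π : Fin N → ℝ) (x : Fin N × Fin m → ℂ) : Prop :=
  ∀ w : Fin m → ℂ, piInnerKron π x (fun p => (π p.1 : ℂ) * w p.2) = 0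


namespace Stmt17Aux

section EN
variable {ι : Type*} [Fintype ι]

/-- Euclidean norm of a complex vector. -/
noncomputable def en (v : ι → ℂ) : ℝ := Real.sqrt (∑ i, ‖v i‖ ^ 2)

lemma en_eq_norm (v : ι → ℂ) : en v = ‖(WithLp.equiv 2 (ι → ℂ)).symm v‖ := by
  rw [EuclideanSpace.norm_eq]; rfl

lemma en_nonneg (v : ι → ℂ) : 0 ≤ en v := Real.sqrt_nonneg _

lemma en_sq (v : ι → ℂ) : en v ^ 2 = ∑ i, ‖v i‖ ^ 2 :=
  Real.sq_sqrt (Finset.sum_nonneg fun _ _ => sq_nonneg _)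

lemma en_zero : en (0 : ι → ℂ) = 0 := by simp [en]

lemma en_add_le (v w : ι → ℂ) : en (v + w) ≤ en v + en w := by
  simp only [en_eq_norm, WithLp.equiv_symm_apply, WithLp.toLp_add]; exact norm_add_le _ _

lemma en_smul (c : ℂ) (v : ι → ℂ) : en (c • v) = ‖c‖ * en v := by
  simp only [en_eq_norm, WithLp.equiv_symm_apply, WithLp.toLp_smul]; exact norm_smul _ _

lemma en_sum_le {κ : Type*} (s : Finset κ) (f : κ → ι → ℂ) :
    en (∑ k ∈ s, f k) ≤ ∑ k ∈ s, en (f k) := by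
  simp only [en_eq_norm]
  rw [show (WithLp.equiv 2 (ι → ℂ)).symm (∑ k ∈ s, f k)
      = ∑ k ∈ s, (WithLp.equiv 2 (ι → ℂ)).symm (f k) from
    map_sum (WithLp.linearEquiv 2 ℂ (ι → ℂ)).symm f s]
  exact norm_sum_le _ _

lemma en_cs (v w : ι → ℂ) : ‖∑ i, (starRingEnd ℂ) (v i) * w i‖ ≤ en v * en w := by
  have h := norm_inner_le_norm (𝕜 := ℂ)
    ((WithLp.equiv 2 (ι → ℂ)).symm v) ((WithLp.equiv 2 (ι → ℂ)).symm w)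
  rw [PiLp.inner_apply] at h
  simp only [RCLike.inner_apply] at h
  rw [en_eq_norm, en_eq_norm]
  simpa only [WithLp.equiv_symm_apply, WithLp.ofLp_toLp, mul_comm] using h

lemma abs_entry_le_en (v : ι → ℂ) (i : ι) : ‖v i‖ ≤ en v := by
  have : ‖v i‖ ^ 2 ≤ ∑ k, ‖v k‖ ^ 2 :=
    Finset.single_le_sum (f := fun k => ‖v k‖ ^ 2) (fun k _ => sq_nonneg _) (Finset.mem_univ i)
  calc ‖v i‖ = Real.sqrt (‖v i‖ ^ 2) := by rw [Real.sqrt_sq (norm_nonneg _)]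
  _ ≤ en v := Real.sqrt_le_sqrt this

lemma en_pos {v : ι → ℂ} (hv : v ≠ 0) : 0 < en v := by
  rcases Function.ne_iff.mp hv with ⟨i, hi⟩
  have h1 : 0 < ‖v i‖ := norm_pos_iff.mpr (by simpa using hi)
  exact lt_of_lt_of_le h1 (abs_entry_le_en v i)

lemma en_single [DecidableEq ι] (j : ι) : en (Pi.single j (1:ℂ)) = 1 := by
  have : ∀ x : ι, ‖(if x = j then (1:ℂ) else 0)‖ ^ 2 = if x = j then 1 else 0 := by
    intro x; split <;> simp
  simp [en, Pi.single_apply, this]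

variable [DecidableEq ι]

lemma en_adj {A : Matrix ι ι ℂ} {c : ℝ} (hc : 0 ≤ c)
    (hA : ∀ x, en (A *ᵥ x) ≤ c * en x) (x : ι → ℂ) : en (Aᴴ *ᵥ x) ≤ c * en x := by
  set u := Aᴴ *ᵥ x with hu
  have h1 : ∑ j, (starRingEnd ℂ) (x j) * (A *ᵥ u) j = ∑ i, (starRingEnd ℂ) (u i) * u i := by
    simp only [Matrix.mulVec, dotProduct, Finset.mul_sum]
    rw [Finset.sum_comm]
    refine Finset.sum_congr rfl fun i _ => ?_
    have : (starRingEnd ℂ) (u i) = ∑ j, A j i * (starRingEnd ℂ) (x j) := by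
      simp only [hu, Matrix.mulVec, dotProduct, Matrix.conjTranspose_apply, map_sum]
      refine Finset.sum_congr rfl fun j _ => ?_
      rw [_root_.map_mul]
      simp only [RCLike.star_def, Complex.conj_conj]
    rw [this, Finset.sum_mul]
    exact Finset.sum_congr rfl fun j _ => by ring
  have h2 : ∑ i, (starRingEnd ℂ) (u i) * u i = ((∑ i, ‖u i‖ ^ 2 : ℝ) : ℂ) := by
    push_cast
    exact Finset.sum_congr rfl fun i _ => by
      rw [RCLike.conj_mul]; norm_cast
  have h3 : en u ^ 2 ≤ en x * (c * en u) := by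
    have hsq : en u ^ 2 = ∑ i, ‖u i‖ ^ 2 := en_sq u
    have heq : (∑ i, ‖u i‖ ^ 2 : ℝ) = ‖∑ j, (starRingEnd ℂ) (x j) * (A *ᵥ u) j‖ := by
      rw [h1, h2, Complex.norm_real, Real.norm_eq_abs,
        abs_of_nonneg (Finset.sum_nonneg (s := Finset.univ) fun i _ => sq_nonneg ‖u i‖)]
    calc en u ^ 2 = ‖∑ j, (starRingEnd ℂ) (x j) * (A *ᵥ u) j‖ := by rw [hsq, heq]
    _ ≤ en x * en (A *ᵥ u) := en_cs _ _
    _ ≤ en x * (c * en u) := by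
        have := hA u
        have hx := en_nonneg x
        nlinarith [en_nonneg (A *ᵥ u)]
  rcases (en_nonneg u).eq_or_lt with h0 | h0
  · rw [← h0]; exact mul_nonneg hc (en_nonneg x)
  · nlinarith [en_nonneg x]

lemma spectralNorm_apply {A : Matrix ι ι ℂ} {l : ℝ} (h : spectralNormMat A ≤ l) (x : ι → ℂ) :
    en (A *ᵥ x) ≤ l * en x := by
  have hcrude : ∀ y : ι → ℂ, en (A *ᵥ y) ≤ Real.sqrt (∑ i, (∑ j, ‖A i j‖) ^ 2) * en y := by
    intro y
    have hrow : ∀ i, ‖(A *ᵥ y) i‖ ≤ (∑ j, ‖A i j‖) * en y := by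
      intro i
      calc ‖(A *ᵥ y) i‖ ≤ ∑ j, ‖A i j * y j‖ := norm_sum_le _ _
      _ ≤ ∑ j, ‖A i j‖ * en y := Finset.sum_le_sum fun j _ => by
          rw [norm_mul]
          exact mul_le_mul_of_nonneg_left (abs_entry_le_en y j) (norm_nonneg _)
      _ = (∑ j, ‖A i j‖) * en y := by rw [Finset.sum_mul]
    calc en (A *ᵥ y) ≤ Real.sqrt (∑ i, ((∑ j, ‖A i j‖) * en y) ^ 2) := by
          apply Real.sqrt_le_sqrt
          exact Finset.sum_le_sum fun i _ => by
            have h1 := hrow i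
            have h2 := norm_nonneg ((A *ᵥ y) i)
            nlinarith
    _ = Real.sqrt ((∑ i, (∑ j, ‖A i j‖) ^ 2) * en y ^ 2) := by
          congr 1
          rw [Finset.sum_mul]
          exact Finset.sum_congr rfl fun i _ => by ring
    _ = Real.sqrt (∑ i, (∑ j, ‖A i j‖) ^ 2) * en y := by
          rw [Real.sqrt_mul (Finset.sum_nonneg fun i _ => sq_nonneg _), Real.sqrt_sq (en_nonneg y)]
  by_cases hx : x = 0
  · subst hx
    rw [Matrix.mulVec_zero, show en (0 : ι → ℂ) = 0 from en_zero]
    simp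
  · have hpos : 0 < en x := en_pos hx
    have hmem : en (A *ᵥ x) / en x ∈ {r : ℝ | ∃ y : ι → ℂ, y ≠ 0 ∧
        r = Real.sqrt (∑ i, ‖(A *ᵥ y) i‖ ^ 2) / Real.sqrt (∑ j, ‖y j‖ ^ 2)} :=
      ⟨x, hx, rfl⟩
    have hbdd : BddAbove {r : ℝ | ∃ y : ι → ℂ, y ≠ 0 ∧
        r = Real.sqrt (∑ i, ‖(A *ᵥ y) i‖ ^ 2) / Real.sqrt (∑ j, ‖y j‖ ^ 2)} := by
      refine ⟨Real.sqrt (∑ i, (∑ j, ‖A i j‖) ^ 2), ?_⟩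
      rintro r ⟨y, hy, rfl⟩
      have hform : Real.sqrt (∑ i, ‖(A *ᵥ y) i‖ ^ 2) / Real.sqrt (∑ j, ‖y j‖ ^ 2)
          = en (A *ᵥ y) / en y := rfl
      rw [hform, div_le_iff₀ (en_pos hy)]
      exact hcrude y
    have hle : en (A *ᵥ x) / en x ≤ spectralNormMat A := le_csSup hbdd hmem
    calc en (A *ᵥ x) = en (A *ᵥ x) / en x * en x := by rw [div_mul_cancel₀ _ hpos.ne']
    _ ≤ spectralNormMat A * en x := mul_le_mul_of_nonneg_right hle (en_nonneg x)
    _ ≤ l * en x := mul_le_mul_of_nonneg_right h (en_nonneg x)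

lemma en_pow {A : Matrix ι ι ℂ} {L : ℝ} (hA : ∀ x, en (A *ᵥ x) ≤ L * en x) (hL : 0 ≤ L)
    (k : ℕ) (x : ι → ℂ) : en (A ^ k *ᵥ x) ≤ L ^ k * en x := by
  induction k generalizing x with
  | zero => simp [Matrix.one_mulVec]
  | succ k ih =>
    rw [pow_succ, ← Matrix.mulVec_mulVec]
    calc en (A ^ k *ᵥ (A *ᵥ x)) ≤ L ^ k * en (A *ᵥ x) := ih _
    _ ≤ L ^ k * (L * en x) := mul_le_mul_of_nonneg_left (hA x) (pow_nonneg hL k)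
    _ = L ^ (k+1) * en x := by ring

lemma hasSum_mexp {A : Matrix ι ι ℂ} {L : ℝ} (hA : ∀ x, en (A *ᵥ x) ≤ L * en x) (hL : 0 ≤ L)
    (x : ι → ℂ) :
    HasSum (fun k : ℕ => (WithLp.equiv 2 (ι → ℂ)).symm (((k.factorial : ℂ)⁻¹) • (A ^ k *ᵥ x)))
      ((WithLp.equiv 2 (ι → ℂ)).symm (mexp A *ᵥ x)) := by
  have hentrybd : ∀ (k : ℕ) i j, ‖(((k.factorial : ℂ)⁻¹) • A ^ k) i j‖ ≤ L ^ k / k.factorial := by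
    intro k i j
    have h1 : (A ^ k) i j = (A ^ k *ᵥ Pi.single j 1) i := by
      simp [Matrix.mulVec_single]
    have h2 : ‖(A ^ k) i j‖ ≤ L ^ k := by
      rw [h1]
      calc ‖(A ^ k *ᵥ Pi.single j 1) i‖ ≤ en (A ^ k *ᵥ Pi.single j 1) := abs_entry_le_en _ i
      _ ≤ L ^ k * en (Pi.single j (1:ℂ)) := en_pow hA hL k _
      _ = L ^ k := by rw [en_single]; ring
    have : ‖(((k.factorial : ℂ)⁻¹) • A ^ k) i j‖ = (k.factorial : ℝ)⁻¹ * ‖(A ^ k) i j‖ := by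
      simp [Matrix.smul_apply, norm_smul]
    rw [this, div_eq_inv_mul]
    exact mul_le_mul_of_nonneg_left h2 (by positivity)
  have hsum : Summable (fun k : ℕ => ((k.factorial : ℂ)⁻¹) • A ^ k) := by
    apply Pi.summable.mpr; intro i
    apply Pi.summable.mpr; intro j
    exact Summable.of_norm_bounded (Real.summable_pow_div_factorial L) (fun k => hentrybd k i j)
  have hmat : HasSum (fun k : ℕ => ((k.factorial : ℂ)⁻¹) • A ^ k) (mexp A) := hsum.hasSum
  let mv : Matrix ι ι ℂ →ₗ[ℂ] (ι → ℂ) :=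
    { toFun := fun M => M *ᵥ x
      map_add' := fun M N => Matrix.add_mulVec M N x
      map_smul' := fun c M => Matrix.smul_mulVec c M x }
  have hpi : HasSum (fun k : ℕ => ((k.factorial : ℂ)⁻¹) • (A ^ k *ᵥ x)) (mexp A *ᵥ x) := by
    have h2 := (mv.toContinuousLinearMap).hasSum hmat
    simpa [mv, Matrix.smul_mulVec] using h2
  exact (PiLp.continuousLinearEquiv 2 ℂ (fun _ : ι => ℂ)).symm.toContinuousLinearMap.hasSum hpi

lemma hasSum_expreal (L : ℝ) : HasSum (fun n : ℕ => L ^ n / n.factorial) (Real.exp L) := by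
  rw [Real.exp_eq_exp_ℝ]
  exact NormedSpace.expSeries_div_hasSum_exp L

lemma en_F_le {A : Matrix ι ι ℂ} {L : ℝ} (hA : ∀ x, en (A *ᵥ x) ≤ L * en x) (hL : 0 ≤ L)
    (x : ι → ℂ) (k : ℕ) :
    ‖(WithLp.equiv 2 (ι → ℂ)).symm (((k.factorial : ℂ)⁻¹) • (A ^ k *ᵥ x))‖
      ≤ L ^ k / k.factorial * en x := by
  rw [← en_eq_norm, en_smul]
  have h1 : ‖((k.factorial : ℂ)⁻¹)‖ = ((k.factorial : ℝ))⁻¹ := by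
    rw [norm_inv]; norm_num
  rw [h1, div_eq_inv_mul, mul_assoc]
  exact mul_le_mul_of_nonneg_left (en_pow hA hL k x) (by positivity)

lemma mexp_bound {A : Matrix ι ι ℂ} {L : ℝ} (hA : ∀ x, en (A *ᵥ x) ≤ L * en x) (hL : 0 ≤ L)
    (x : ι → ℂ) : en (mexp A *ᵥ x) ≤ Real.exp L * en x := by
  have hF := hasSum_mexp hA hL x
  have hmaj : HasSum (fun n : ℕ => L ^ n / n.factorial * en x) (Real.exp L * en x) :=
    (hasSum_expreal L).mul_right _
  rw [en_eq_norm]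
  exact hF.norm_le_of_bounded hmaj (en_F_le hA hL x)

lemma mexp_sub_one_bound {A : Matrix ι ι ℂ} {L : ℝ} (hA : ∀ x, en (A *ᵥ x) ≤ L * en x)
    (hL : 0 ≤ L) (x : ι → ℂ) : en ((mexp A - 1) *ᵥ x) ≤ (Real.exp L - 1) * en x := by
  set F := fun k : ℕ => (WithLp.equiv 2 (ι → ℂ)).symm (((k.factorial : ℂ)⁻¹) • (A ^ k *ᵥ x))
    with hFdef
  have hF := hasSum_mexp hA hL x
  have hF0 : F 0 = (WithLp.equiv 2 (ι → ℂ)).symm x := by simp [hFdef, Matrix.one_mulVec]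
  have hF1 : HasSum (fun n => F (n + 1)) ((WithLp.equiv 2 (ι → ℂ)).symm (mexp A *ᵥ x) - F 0) := by
    rw [hasSum_nat_add_iff 1]
    simp only [Finset.range_one, Finset.sum_singleton, sub_add_cancel]
    exact hF
  have hmaj : HasSum (fun n : ℕ => L ^ (n + 1) / (n + 1).factorial * en x)
      ((Real.exp L - 1) * en x) := by
    have : HasSum (fun n : ℕ => L ^ (n + 1) / (n + 1).factorial) (Real.exp L - 1) := by
      rw [hasSum_nat_add_iff (f := fun n : ℕ => L ^ n / (n.factorial : ℝ)) 1]
      simpa using hasSum_expreal L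
    exact this.mul_right _
  have key : ‖(WithLp.equiv 2 (ι → ℂ)).symm (mexp A *ᵥ x) - F 0‖ ≤ (Real.exp L - 1) * en x :=
    hF1.norm_le_of_bounded hmaj (fun n => en_F_le hA hL x (n + 1))
  have heq : (WithLp.equiv 2 (ι → ℂ)).symm (mexp A *ᵥ x) - F 0
      = (WithLp.equiv 2 (ι → ℂ)).symm ((mexp A - 1) *ᵥ x) := by
    rw [hF0, WithLp.equiv_symm_apply, ← WithLp.toLp_sub]
    congr 1
    rw [Matrix.sub_mulVec, Matrix.one_mulVec]
  rw [en_eq_norm, ← heq]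
  exact key

lemma mexp_sub_one_sub_bound {A : Matrix ι ι ℂ} {L : ℝ} (hA : ∀ x, en (A *ᵥ x) ≤ L * en x)
    (hL : 0 ≤ L) (x : ι → ℂ) : en ((mexp A - 1 - A) *ᵥ x) ≤ (Real.exp L - 1 - L) * en x := by
  set F := fun k : ℕ => (WithLp.equiv 2 (ι → ℂ)).symm (((k.factorial : ℂ)⁻¹) • (A ^ k *ᵥ x))
    with hFdef
  have hF := hasSum_mexp hA hL x
  have hF0 : F 0 = (WithLp.equiv 2 (ι → ℂ)).symm x := by simp [hFdef, Matrix.one_mulVec]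
  have hF1 : F 1 = (WithLp.equiv 2 (ι → ℂ)).symm (A *ᵥ x) := by simp [hFdef]
  have hsum01 : ∑ i ∈ Finset.range 2, F i = F 0 + F 1 := by
    simp [Finset.sum_range_succ]
  have hF2 : HasSum (fun n => F (n + 2))
      ((WithLp.equiv 2 (ι → ℂ)).symm (mexp A *ᵥ x) - F 0 - F 1) := by
    rw [hasSum_nat_add_iff 2, hsum01]
    have h5 : (WithLp.equiv 2 (ι → ℂ)).symm (mexp A *ᵥ x) - F 0 - F 1 + (F 0 + F 1)
        = (WithLp.equiv 2 (ι → ℂ)).symm (mexp A *ᵥ x) := by abel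
    rw [h5]
    exact hF
  have hmaj : HasSum (fun n : ℕ => L ^ (n + 2) / (n + 2).factorial * en x)
      ((Real.exp L - 1 - L) * en x) := by
    have : HasSum (fun n : ℕ => L ^ (n + 2) / (n + 2).factorial) (Real.exp L - 1 - L) := by
      rw [hasSum_nat_add_iff (f := fun n : ℕ => L ^ n / (n.factorial : ℝ)) 2]
      have h2 : ∑ i ∈ Finset.range 2, L ^ i / (i.factorial : ℝ) = 1 + L := by
        simp [Finset.sum_range_succ]
      rw [h2]
      have h6 : Real.exp L - 1 - L + (1 + L) = Real.exp L := by ring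
      rw [h6]
      exact hasSum_expreal L
    exact this.mul_right _
  have key : ‖(WithLp.equiv 2 (ι → ℂ)).symm (mexp A *ᵥ x) - F 0 - F 1‖
      ≤ (Real.exp L - 1 - L) * en x :=
    hF2.norm_le_of_bounded hmaj (fun n => en_F_le hA hL x (n + 2))
  have heq : (WithLp.equiv 2 (ι → ℂ)).symm (mexp A *ᵥ x) - F 0 - F 1
      = (WithLp.equiv 2 (ι → ℂ)).symm ((mexp A - 1 - A) *ᵥ x) := by
    rw [hF0, hF1, WithLp.equiv_symm_apply, ← WithLp.toLp_sub, ← WithLp.toLp_sub]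
    congr 1
    rw [Matrix.sub_mulVec, Matrix.sub_mulVec, Matrix.one_mulVec]
  rw [en_eq_norm, ← heq]
  exact key

end EN

section Spec
variable {S : Type*} [Fintype S] {P : Matrix S S ℝ} {π : S → ℝ}

lemma piNorm_nonneg (π : S → ℝ) (x : S → ℂ) : 0 ≤ piNorm π x := Real.sqrt_nonneg _

lemma piNorm_sq (hπ : ∀ i, 0 < π i) (x : S → ℂ) : piNorm π x ^ 2 = ∑ i, ‖x i‖ ^ 2 / π i :=
  Real.sq_sqrt (Finset.sum_nonneg fun i _ => div_nonneg (sq_nonneg _) (hπ i).le)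

lemma piNorm_pos (hπ : ∀ i, 0 < π i) {x : S → ℂ} (hx : x ≠ 0) : 0 < piNorm π x := by
  rcases Function.ne_iff.mp hx with ⟨i, hi⟩
  apply Real.sqrt_pos.mpr
  have h1 : 0 < ‖x i‖ ^ 2 / π i := by
    have hx' : 0 < ‖x i‖ := norm_pos_iff.mpr (by simpa using hi)
    exact div_pos (by positivity) (hπ i)
  exact lt_of_lt_of_le h1 (Finset.single_le_sum (f := fun i => ‖x i‖ ^ 2 / π i)
    (fun i _ => div_nonneg (sq_nonneg _) (hπ i).le) (Finset.mem_univ i))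

lemma contraction (hP : IsMarkov P) (hπ : IsStationaryMC P π) (x : S → ℂ) :
    piNorm π ((P.map Complex.ofReal)ᵀ *ᵥ x) ≤ piNorm π x := by
  obtain ⟨hPnn, hProw⟩ := hP
  obtain ⟨hπpos, hπsum, hπstat⟩ := hπ
  apply Real.sqrt_le_sqrt
  have key : ∀ j, ‖((P.map Complex.ofReal)ᵀ *ᵥ x) j‖ ^ 2 / π j
      ≤ ∑ i, P i j * (‖x i‖ ^ 2 / π i) := by
    intro j
    have h1 : ‖((P.map Complex.ofReal)ᵀ *ᵥ x) j‖ ≤ ∑ i, P i j * ‖x i‖ := by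
      simp only [Matrix.mulVec, dotProduct, Matrix.transpose_apply, Matrix.map_apply]
      refine (norm_sum_le _ _).trans ?_
      refine Finset.sum_le_sum fun i _ => ?_
      rw [norm_mul, Complex.norm_real, Real.norm_eq_abs, abs_of_nonneg (hPnn i j)]
    have h2 : (∑ i, P i j * ‖x i‖) ^ 2 ≤ π j * ∑ i, P i j * (‖x i‖ ^ 2 / π i) := by
      have hcs := Finset.sum_mul_sq_le_sq_mul_sq Finset.univ
        (fun i => Real.sqrt (π i * P i j)) (fun i => Real.sqrt (P i j / π i) * ‖x i‖)
      have he : ∀ i, Real.sqrt (π i * P i j) * (Real.sqrt (P i j / π i) * ‖x i‖)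
          = P i j * ‖x i‖ := by
        intro i
        have hne : π i ≠ 0 := (hπpos i).ne'
        rw [← mul_assoc, ← Real.sqrt_mul (mul_nonneg (hπpos i).le (hPnn i j))]
        have : π i * P i j * (P i j / π i) = P i j ^ 2 := by
          field_simp
        rw [this, Real.sqrt_sq (hPnn i j)]
      have hf : ∀ i, Real.sqrt (π i * P i j) ^ 2 = π i * P i j := fun i =>
        Real.sq_sqrt (mul_nonneg (hπpos i).le (hPnn i j))
      have hg : ∀ i, (Real.sqrt (P i j / π i) * ‖x i‖) ^ 2 = P i j * (‖x i‖ ^ 2 / π i) := by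
        intro i
        rw [mul_pow, Real.sq_sqrt (div_nonneg (hPnn i j) (hπpos i).le)]
        rw [div_mul_eq_mul_div, mul_div_assoc]
      simp only [he, hf, hg] at hcs
      rwa [hπstat j] at hcs
    have hπj := (hπpos j)
    rw [div_le_iff₀ hπj]
    calc ‖((P.map Complex.ofReal)ᵀ *ᵥ x) j‖ ^ 2 ≤ (∑ i, P i j * ‖x i‖) ^ 2 := by
          apply sq_le_sq' _ h1
          have : 0 ≤ ∑ i, P i j * ‖x i‖ := Finset.sum_nonneg fun i _ =>
            mul_nonneg (hPnn i j) (norm_nonneg _)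
          nlinarith [norm_nonneg (((P.map Complex.ofReal)ᵀ *ᵥ x) j)]
    _ ≤ π j * ∑ i, P i j * (‖x i‖ ^ 2 / π i) := h2
    _ = (∑ i, P i j * (‖x i‖ ^ 2 / π i)) * π j := by ring
  calc ∑ j, ‖((P.map Complex.ofReal)ᵀ *ᵥ x) j‖ ^ 2 / π j
      ≤ ∑ j, ∑ i, P i j * (‖x i‖ ^ 2 / π i) := Finset.sum_le_sum fun j _ => key j
  _ = ∑ i, (∑ j, P i j) * (‖x i‖ ^ 2 / π i) := by
      rw [Finset.sum_comm]
      exact Finset.sum_congr rfl fun i _ => by rw [Finset.sum_mul]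
  _ = ∑ i, ‖x i‖ ^ 2 / π i := Finset.sum_congr rfl fun i _ => by rw [hProw i, one_mul]

lemma specExp_nonneg (P : Matrix S S ℝ) (π : S → ℝ) : 0 ≤ specExp P π := by
  apply Real.sSup_nonneg
  rintro r ⟨x, -, -, rfl⟩
  exact div_nonneg (Real.sqrt_nonneg _) (Real.sqrt_nonneg _)

lemma spec_apply (hP : IsMarkov P) (hπ : IsStationaryMC P π) {x : S → ℂ}
    (hx0 : ∑ i, x i = 0) :
    piNorm π ((P.map Complex.ofReal)ᵀ *ᵥ x) ≤ specExp P π * piNorm π x := by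
  by_cases hx : x = 0
  · subst hx
    simp only [Matrix.mulVec_zero]
    have : piNorm π (0 : S → ℂ) = 0 := by simp [piNorm]
    rw [this, mul_zero]
  · have hπpos := hπ.1
    have hpn : 0 < piNorm π x := piNorm_pos hπpos hx
    have hmem : piNorm π ((P.map Complex.ofReal)ᵀ *ᵥ x) / piNorm π x ∈
        {r : ℝ | ∃ y : S → ℂ, y ≠ 0 ∧ piInner π y (fun i => (π i : ℂ)) = 0 ∧
          r = piNorm π ((P.map Complex.ofReal)ᵀ *ᵥ y) / piNorm π y} := by
      refine ⟨x, hx, ?_, rfl⟩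
      unfold piInner
      have : ∀ i, (starRingEnd ℂ) ((π i : ℂ)) * x i / (π i : ℂ) = x i := by
        intro i
        rw [Complex.conj_ofReal]
        rw [mul_comm, mul_div_assoc, div_self (by exact_mod_cast (hπpos i).ne'), mul_one]
      simp only [this]
      exact hx0
    have hbdd : BddAbove {r : ℝ | ∃ y : S → ℂ, y ≠ 0 ∧ piInner π y (fun i => (π i : ℂ)) = 0 ∧
        r = piNorm π ((P.map Complex.ofReal)ᵀ *ᵥ y) / piNorm π y} := by
      refine ⟨1, ?_⟩
      rintro r ⟨y, hy, -, rfl⟩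
      rw [div_le_one (piNorm_pos hπpos hy)]
      exact contraction hP hπ y
    have hle := le_csSup hbdd hmem
    calc piNorm π ((P.map Complex.ofReal)ᵀ *ᵥ x)
        = piNorm π ((P.map Complex.ofReal)ᵀ *ᵥ x) / piNorm π x * piNorm π x := by
          rw [div_mul_cancel₀ _ hpn.ne']
    _ ≤ specExp P π * piNorm π x := mul_le_mul_of_nonneg_right hle (piNorm_nonneg _ _)

end Spec

section Kron
variable {N m : ℕ} {P : Matrix (Fin N) (Fin N) ℝ} {π : Fin N → ℝ}

lemma kron_mulVec_apply (y : Fin N × Fin m → ℂ) (k : Fin N) (b : Fin m) :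
    (((P.map Complex.ofReal) ⊗ₖ (1 : Matrix (Fin m) (Fin m) ℂ))ᵀ *ᵥ y) (k, b)
      = ∑ j, (P j k : ℂ) * y (j, b) := by
  simp only [Matrix.mulVec, dotProduct, Matrix.transpose_apply, Matrix.kroneckerMap_apply,
    Matrix.map_apply, Matrix.one_apply, Fintype.sum_prod_type]
  refine Finset.sum_congr rfl fun j _ => ?_
  rw [Finset.sum_eq_single b]
  · simp
  · intro b' _ hb'; simp [hb']
  · intro h; exact absurd (Finset.mem_univ b) h

lemma colsum_kron_mulVec (hProw : ∀ i, ∑ j, P i j = 1) (y : Fin N × Fin m → ℂ) (b : Fin m) :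
    ∑ k, (((P.map Complex.ofReal) ⊗ₖ (1 : Matrix (Fin m) (Fin m) ℂ))ᵀ *ᵥ y) (k, b)
      = ∑ j, y (j, b) := by
  simp only [kron_mulVec_apply]
  rw [Finset.sum_comm]
  refine Finset.sum_congr rfl fun j _ => ?_
  rw [← Finset.sum_mul]
  have : (∑ k, (P j k : ℂ)) = 1 := by
    rw [← Complex.ofReal_sum, hProw j, Complex.ofReal_one]
  rw [this, one_mul]

lemma kron_mulVec_stationary (hπstat : ∀ j, ∑ i, π i * P i j = π j) (c : Fin m → ℂ) :
    (((P.map Complex.ofReal) ⊗ₖ (1 : Matrix (Fin m) (Fin m) ℂ))ᵀ *ᵥ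
      (fun p => (π p.1 : ℂ) * c p.2)) = fun p => (π p.1 : ℂ) * c p.2 := by
  funext p
  obtain ⟨k, b⟩ := p
  rw [kron_mulVec_apply]
  have : ∀ j : Fin N, (P j k : ℂ) * ((π j : ℂ) * c b) = ((π j * P j k : ℝ) : ℂ) * c b := by
    intro j; push_cast; ring
  simp only [this]
  rw [← Finset.sum_mul, ← Complex.ofReal_sum, hπstat k]

lemma blockDiag'_conjT_mulVec (M : Fin N → Matrix (Fin m) (Fin m) ℂ)
    (x : Fin N × Fin m → ℂ) (i : Fin N) (b : Fin m) :
    ((blockDiag' M)ᴴ *ᵥ x) (i, b) = ((M i)ᴴ *ᵥ (fun b' => x (i, b'))) b := by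
  simp only [Matrix.mulVec, dotProduct, Matrix.conjTranspose_apply,
    Fintype.sum_prod_type]
  rw [Finset.sum_eq_single i]
  · simp [_root_.blockDiag']
  · intro i' _ hi'
    simp [_root_.blockDiag', hi']
  · intro h; exact absurd (Finset.mem_univ i) h

lemma pn_nonneg (x : Fin N × Fin m → ℂ) : 0 ≤ piNormKron π x := Real.sqrt_nonneg _

lemma pn_rows (x : Fin N × Fin m → ℂ) :
    piNormKron π x = Real.sqrt (∑ i, en (fun b => x (i, b)) ^ 2 / π i) := by
  unfold piNormKron
  congr 1
  rw [Fintype.sum_prod_type]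
  exact Finset.sum_congr rfl fun i _ => by rw [en_sq, Finset.sum_div]

lemma pn_zero : piNormKron π (0 : Fin N × Fin m → ℂ) = 0 := by simp [piNormKron]

lemma pn_pi_tensor (hπpos : ∀ i, 0 < π i) (hπsum : ∑ i, π i = 1) (w : Fin m → ℂ) :
    piNormKron π (fun p => (π p.1 : ℂ) * w p.2) = en w := by
  unfold piNormKron en
  congr 1
  rw [Fintype.sum_prod_type]
  have : ∀ i : Fin N, ∑ b, ‖(π i : ℂ) * w b‖ ^ 2 / π i = π i * ∑ b, ‖w b‖ ^ 2 := by
    intro i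
    rw [Finset.mul_sum]
    refine Finset.sum_congr rfl fun b _ => ?_
    rw [norm_mul, Complex.norm_real, Real.norm_eq_abs, abs_of_nonneg (hπpos i).le, mul_pow]
    have hne : π i ≠ 0 := (hπpos i).ne'
    field_simp
  simp only [this]
  rw [← Finset.sum_mul, hπsum, one_mul]

lemma pn_pi_rowscale (hπpos : ∀ i, 0 < π i) (v : Fin N → Fin m → ℂ) :
    piNormKron π (fun p => (π p.1 : ℂ) * v p.1 p.2)
      = Real.sqrt (∑ i, π i * en (v i) ^ 2) := by
  unfold piNormKron
  congr 1
  rw [Fintype.sum_prod_type]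
  refine Finset.sum_congr rfl fun i _ => ?_
  rw [en_sq, Finset.mul_sum]
  refine Finset.sum_congr rfl fun b _ => ?_
  rw [norm_mul, Complex.norm_real, Real.norm_eq_abs, abs_of_nonneg (hπpos i).le, mul_pow]
  have hne : π i ≠ 0 := (hπpos i).ne'
  field_simp

lemma pn_eq_en (hπpos : ∀ i, 0 < π i) (x : Fin N × Fin m → ℂ) :
    piNormKron π x = en (fun p => ((Real.sqrt (π p.1))⁻¹ : ℂ) * x p) := by
  unfold piNormKron en
  congr 1
  refine Finset.sum_congr rfl fun p _ => ?_
  rw [norm_mul]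
  have h1 : ‖(((Real.sqrt (π p.1) : ℝ) : ℂ))⁻¹‖ = (Real.sqrt (π p.1))⁻¹ := by
    rw [norm_inv, Complex.norm_real, Real.norm_eq_abs, abs_of_nonneg (Real.sqrt_nonneg _)]
  rw [h1, mul_pow, ← Real.sqrt_inv, Real.sq_sqrt (inv_nonneg.mpr (hπpos p.1).le)]
  rw [div_eq_inv_mul, mul_comm]

lemma pn_add_le (hπpos : ∀ i, 0 < π i) (x y : Fin N × Fin m → ℂ) :
    piNormKron π (x + y) ≤ piNormKron π x + piNormKron π y := by
  rw [pn_eq_en hπpos, pn_eq_en hπpos, pn_eq_en hπpos]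
  have hxy : (fun p => ((Real.sqrt (π p.1))⁻¹ : ℂ) * (x + y) p)
      = (fun p => ((Real.sqrt (π p.1))⁻¹ : ℂ) * x p)
        + fun p => ((Real.sqrt (π p.1))⁻¹ : ℂ) * y p := by
    funext p; simp [mul_add]
  rw [hxy]
  exact en_add_le _ _

lemma sum_row_en_le (hπpos : ∀ i, 0 < π i) (hπsum : ∑ i, π i = 1) (x : Fin N × Fin m → ℂ) :
    ∑ i, en (fun b => x (i, b)) ≤ piNormKron π x := by
  have hcs := Finset.sum_mul_sq_le_sq_mul_sq Finset.univ
    (fun i => Real.sqrt (π i)) (fun i => en (fun b => x (i, b)) / Real.sqrt (π i))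
  have he : ∀ i : Fin N, Real.sqrt (π i) * (en (fun b => x (i, b)) / Real.sqrt (π i))
      = en (fun b => x (i, b)) := by
    intro i
    rw [mul_comm, div_mul_cancel₀ _ (Real.sqrt_ne_zero'.mpr (hπpos i))]
  have hf : ∀ i : Fin N, Real.sqrt (π i) ^ 2 = π i := fun i => Real.sq_sqrt (hπpos i).le
  have hg : ∀ i : Fin N, (en (fun b => x (i, b)) / Real.sqrt (π i)) ^ 2
      = en (fun b => x (i, b)) ^ 2 / π i := by
    intro i
    rw [div_pow, Real.sq_sqrt (hπpos i).le]
  simp only [he, hf, hg] at hcs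
  rw [hπsum, one_mul] at hcs
  rw [pn_rows]
  have h0 : 0 ≤ ∑ i, en (fun b => x (i, b)) := Finset.sum_nonneg fun i _ => en_nonneg _
  calc ∑ i, en (fun b => x (i, b))
      = Real.sqrt ((∑ i, en (fun b => x (i, b))) ^ 2) := (Real.sqrt_sq h0).symm
  _ ≤ Real.sqrt (∑ i, en (fun b => x (i, b)) ^ 2 / π i) := Real.sqrt_le_sqrt hcs

lemma pn_perp_le (hπpos : ∀ i, 0 < π i) (hπsum : ∑ i, π i = 1) (x : Fin N × Fin m → ℂ) :
    piNormKron π (fun p => x p - (π p.1 : ℂ) * (∑ j, x (j, p.2))) ≤ piNormKron π x := by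
  unfold piNormKron
  apply Real.sqrt_le_sqrt
  rw [Fintype.sum_prod_type_right, Fintype.sum_prod_type_right]
  have key : ∀ b : Fin m, ∑ j, ‖x (j, b) - (π j : ℂ) * (∑ k, x (k, b))‖ ^ 2 / π j
      ≤ ∑ j, ‖x (j, b)‖ ^ 2 / π j := by
    intro b
    set c : ℂ := ∑ k, x (k, b) with hc
    have hsubsq : ∀ u v : ℂ, ‖u - v‖ ^ 2 = ‖u‖ ^ 2 + ‖v‖ ^ 2 - 2 * (u * (starRingEnd ℂ) v).re := by
      intro u v
      rw [Complex.sq_norm, Complex.sq_norm, Complex.sq_norm]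
      exact Complex.normSq_sub u v
    have hterm : ∀ j : Fin N, ‖x (j, b) - (π j : ℂ) * c‖ ^ 2 / π j
        = ‖x (j, b)‖ ^ 2 / π j + π j * ‖c‖ ^ 2 - 2 * (x (j, b) * (starRingEnd ℂ) c).re := by
      intro j
      have hne : π j ≠ 0 := (hπpos j).ne'
      have h1 : (x (j, b) * (starRingEnd ℂ) ((π j : ℂ) * c)).re
          = π j * (x (j, b) * (starRingEnd ℂ) c).re := by
        rw [_root_.map_mul, Complex.conj_ofReal]
        rw [show x (j, b) * ((π j : ℂ) * (starRingEnd ℂ) c)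
            = (π j : ℂ) * (x (j, b) * (starRingEnd ℂ) c) by ring]
        exact Complex.re_ofReal_mul _ _
      have h2 : ‖(π j : ℂ) * c‖ ^ 2 = π j ^ 2 * ‖c‖ ^ 2 := by
        rw [norm_mul, Complex.norm_real, Real.norm_eq_abs, abs_of_nonneg (hπpos j).le, mul_pow]
      rw [hsubsq, h1, h2]
      field_simp
    have hsum : ∑ j, ‖x (j, b) - (π j : ℂ) * c‖ ^ 2 / π j
        = (∑ j, ‖x (j, b)‖ ^ 2 / π j) + ‖c‖ ^ 2 - 2 * ‖c‖ ^ 2 := by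
      rw [Finset.sum_congr rfl fun j _ => hterm j]
      rw [Finset.sum_sub_distrib, Finset.sum_add_distrib, ← Finset.sum_mul, hπsum, one_mul]
      have h4 : ∑ j, 2 * (x (j, b) * (starRingEnd ℂ) c).re = 2 * ‖c‖ ^ 2 := by
        rw [← Finset.mul_sum, ← Complex.re_sum, ← Finset.sum_mul, ← hc]
        rw [show (c * (starRingEnd ℂ) c).re = ‖c‖ ^ 2 by
          rw [Complex.mul_conj, Complex.ofReal_re, Complex.sq_norm]]
      rw [h4]
    rw [hsum]
    nlinarith [sq_nonneg ‖c‖]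
  exact Finset.sum_le_sum fun b _ => key b

lemma spec_kron (hP : IsMarkov P) (hπ : IsStationaryMC P π) (x : Fin N × Fin m → ℂ)
    (hx : ∀ b, ∑ j, x (j, b) = 0) :
    piNormKron π (((P.map Complex.ofReal) ⊗ₖ (1 : Matrix (Fin m) (Fin m) ℂ))ᵀ *ᵥ x)
      ≤ specExp P π * piNormKron π x := by
  have hπpos := hπ.1
  have hcol : ∀ (v : Fin N × Fin m → ℂ),
      piNormKron π v = Real.sqrt (∑ b, piNorm π (fun k => v (k, b)) ^ 2) := by
    intro v
    unfold piNormKron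
    congr 1
    rw [Fintype.sum_prod_type_right]
    exact Finset.sum_congr rfl fun b _ => (piNorm_sq hπpos _).symm
  have hPcol : ∀ b k, (((P.map Complex.ofReal) ⊗ₖ (1 : Matrix (Fin m) (Fin m) ℂ))ᵀ *ᵥ x) (k, b)
      = ((P.map Complex.ofReal)ᵀ *ᵥ (fun j => x (j, b))) k := by
    intro b k
    rw [kron_mulVec_apply]
    simp [Matrix.mulVec, dotProduct, Matrix.transpose_apply, Matrix.map_apply]
  rw [hcol, hcol]
  have hlam := specExp_nonneg P π
  calc Real.sqrt (∑ b, piNorm π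
        (fun k => (((P.map Complex.ofReal) ⊗ₖ (1 : Matrix (Fin m) (Fin m) ℂ))ᵀ *ᵥ x) (k, b)) ^ 2)
      ≤ Real.sqrt (∑ b, (specExp P π * piNorm π (fun k => x (k, b))) ^ 2) := by
        apply Real.sqrt_le_sqrt
        refine Finset.sum_le_sum fun b _ => ?_
        have hb : piNorm π (fun k => (((P.map Complex.ofReal) ⊗ₖ
            (1 : Matrix (Fin m) (Fin m) ℂ))ᵀ *ᵥ x) (k, b))
            = piNorm π ((P.map Complex.ofReal)ᵀ *ᵥ (fun j => x (j, b))) := by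
          congr 1
          funext k
          exact hPcol b k
        rw [hb]
        have hs := spec_apply hP hπ (hx b)
        have h0 := piNorm_nonneg π ((P.map Complex.ofReal)ᵀ *ᵥ (fun j => x (j, b)))
        nlinarith [piNorm_nonneg π (fun k => x (k, b)), mul_nonneg hlam
          (piNorm_nonneg π (fun k => x (k, b)))]
  _ = specExp P π * Real.sqrt (∑ b, piNorm π (fun k => x (k, b)) ^ 2) := by
        rw [show ∑ b, (specExp P π * piNorm π (fun k => x (k, b))) ^ 2
            = specExp P π ^ 2 * ∑ b, piNorm π (fun k => x (k, b)) ^ 2 by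
          rw [Finset.mul_sum]; exact Finset.sum_congr rfl fun b _ => by ring]
        rw [Real.sqrt_mul (sq_nonneg _), Real.sqrt_sq hlam]

end Kron

end Stmt17Aux

open Stmt17Aux

theorem stmt_17 {N m : ℕ} (hm : 1 ≤ m)
    (P : Matrix (Fin N) (Fin N) ℝ) (π : Fin N → ℝ)
    (hP : IsMarkov P) (hreg : IsRegularMC P) (hπ : IsStationaryMC P π)
    (ℓ t : ℝ) (hℓ : 0 ≤ ℓ) (ht : 0 < t)
    (H : Fin N → Matrix (Fin m) (Fin m) ℂ)
    (hH : ∀ i, spectralNormMat (H i) ≤ ℓ)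
    (hmean : ∑ i, π i • H i = 0)
    (hα₄ : specExp P π * Real.exp (t * ℓ) < 1)
    (z zpar zperp : ℕ → (Fin N × Fin m → ℂ))
    (hz0 : memU π (z 0)) (hz0perp : zperp 0 = 0)
    (hrec : ∀ i : ℕ, z (i + 1) =
      ((P.map Complex.ofReal) ⊗ₖ (1 : Matrix (Fin m) (Fin m) ℂ))ᵀ *ᵥ
        ((blockDiag' fun v => mexp ((t : ℂ) • H v))ᴴ *ᵥ z i))
    (hdec : ∀ i, z i = zpar i + zperp i)
    (hpar : ∀ i, memU π (zpar i)) (hperp : ∀ i, perpU π (zperp i)) :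
    ∀ (i : ℕ) (hi : 1 ≤ i),
      piNormKron π (zpar i) ≤
        ((Real.exp (t * ℓ) - t * ℓ) + specExp P π * (Real.exp (t * ℓ) - 1) ^ 2 / (1 - specExp P π * Real.exp (t * ℓ))) *
          (Finset.range i).sup' (Finset.nonempty_range_iff.mpr (by omega))
            (fun j => piNormKron π (zpar j)) := by
  classical
  obtain ⟨hPnn, hProw⟩ := hP
  obtain ⟨hπpos, hπsum, hπstat⟩ := hπ
  have hL0 : 0 ≤ t * ℓ := mul_nonneg ht.le hℓ
  have heL1 : 1 + t * ℓ ≤ Real.exp (t * ℓ) := by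
    have := Real.add_one_le_exp (t * ℓ); linarith
  have hlam0 : 0 ≤ specExp P π := specExp_nonneg P π
  have hq1 : specExp P π * Real.exp (t * ℓ) < 1 := hα₄
  set lam := specExp P π with hlamdef
  set eL := Real.exp (t * ℓ) with heLdef
  -- matrix exponential operator facts
  set M : Fin N → Matrix (Fin m) (Fin m) ℂ := fun v => mexp ((t : ℂ) • H v) with hMdef
  have hHen : ∀ (v : Fin N) (x : Fin m → ℂ), en (H v *ᵥ x) ≤ ℓ * en x :=
    fun v => spectralNorm_apply (hH v)
  have hAen : ∀ (v : Fin N) (x : Fin m → ℂ), en (((t : ℂ) • H v) *ᵥ x) ≤ (t * ℓ) * en x := by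
    intro v x
    rw [Matrix.smul_mulVec, en_smul]
    have hnt : ‖(t : ℂ)‖ = t := by
      rw [Complex.norm_real, Real.norm_eq_abs, abs_of_pos ht]
    rw [hnt]
    calc t * en (H v *ᵥ x) ≤ t * (ℓ * en x) := mul_le_mul_of_nonneg_left (hHen v x) ht.le
    _ = (t * ℓ) * en x := by ring
  have hM1 : ∀ (v : Fin N) (u : Fin m → ℂ), en ((M v)ᴴ *ᵥ u) ≤ eL * en u := fun v =>
    en_adj (by rw [heLdef]; positivity) (mexp_bound (hAen v) hL0)
  have hM2 : ∀ (v : Fin N) (u : Fin m → ℂ), en (((M v)ᴴ - 1) *ᵥ u) ≤ (eL - 1) * en u := by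
    intro v u
    have h := en_adj (c := eL - 1) (by rw [heLdef]; linarith)
      (mexp_sub_one_bound (hAen v) hL0) u
    have heq : (M v)ᴴ - 1 = (mexp ((t : ℂ) • H v) - 1)ᴴ := by
      rw [Matrix.conjTranspose_sub, Matrix.conjTranspose_one, hMdef]
    rw [heq]
    exact h
  have hM3 : ∀ (v : Fin N) (u : Fin m → ℂ),
      en (((M v)ᴴ - 1 - ((t : ℂ) • H v)ᴴ) *ᵥ u) ≤ (eL - 1 - t * ℓ) * en u := by
    intro v u
    have h := en_adj (c := eL - 1 - t * ℓ) (by rw [heLdef]; linarith)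
      (mexp_sub_one_sub_bound (hAen v) hL0) u
    have heq : (M v)ᴴ - 1 - ((t : ℂ) • H v)ᴴ = (mexp ((t : ℂ) • H v) - 1 - (t : ℂ) • H v)ᴴ := by
      rw [Matrix.conjTranspose_sub, Matrix.conjTranspose_sub, Matrix.conjTranspose_one, hMdef]
    rw [heq]
    exact h
  -- mean-zero fact for the conjugate transposes
  have hmean' : ∑ v, (π v : ℂ) • ((t : ℂ) • H v)ᴴ = 0 := by
    have h1 : ∀ v : Fin N, (π v : ℂ) • ((t : ℂ) • H v)ᴴ
        = (t : ℂ) • ((π v : ℂ) • (H v)ᴴ) := by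
      intro v
      rw [Matrix.conjTranspose_smul, RCLike.star_def, Complex.conj_ofReal]
      rw [smul_comm]
    simp only [h1]
    rw [← Finset.smul_sum]
    have h2 : ∑ v, (π v : ℂ) • (H v)ᴴ = (∑ v, (π v : ℂ) • H v)ᴴ := by
      rw [Matrix.conjTranspose_sum]
      refine Finset.sum_congr rfl fun v _ => ?_
      rw [Matrix.conjTranspose_smul, RCLike.star_def, Complex.conj_ofReal]
    have h3 : ∑ v, (π v : ℂ) • H v = 0 := by
      have h4 : ∀ v : Fin N, (π v : ℂ) • H v = π v • H v := by
        intro v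
        ext a c
        simp [Matrix.smul_apply, Complex.real_smul]
      simp only [h4]
      exact hmean
    rw [h2, h3]
    simp
  -- the parallel components
  set W : ℕ → Fin m → ℂ := fun i b => ∑ j, z i (j, b) with hWdef
  have hperpcol : ∀ (i : ℕ) (b : Fin m), ∑ j, zperp i (j, b) = 0 := by
    intro i b
    have h := hperp i (Pi.single b 1)
    unfold piInnerKron at h
    rw [Fintype.sum_prod_type] at h
    have heval : ∀ j : Fin N, ∑ b' : Fin m,
        (starRingEnd ℂ) ((π j : ℂ) * (Pi.single b (1:ℂ) : Fin m → ℂ) b') * zperp i (j, b') / (π j : ℂ)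
        = zperp i (j, b) := by
      intro j
      have hne : ((π j : ℝ) : ℂ) ≠ 0 := by exact_mod_cast (hπpos j).ne'
      rw [Finset.sum_eq_single b]
      · simp only [Pi.single_eq_same, mul_one, Complex.conj_ofReal]
        rw [mul_comm, mul_div_assoc, div_self hne, mul_one]
      · intro b' _ hb'
        simp [Pi.single_apply, hb']
      · intro h'; exact absurd (Finset.mem_univ b) h'
    rw [Finset.sum_congr rfl fun j _ => heval j] at h
    exact h
  have hzpar' : ∀ i : ℕ, zpar i = fun p => (π p.1 : ℂ) * W i p.2 := by
    intro i
    obtain ⟨w, hw⟩ := hpar i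
    have hWw : ∀ b, W i b = w b := by
      intro b
      rw [hWdef]
      have hz : ∀ j : Fin N, z i (j, b) = (π j : ℂ) * w b + zperp i (j, b) := by
        intro j
        rw [hdec i]
        simp [hw (j, b)]
      calc ∑ j, z i (j, b) = ∑ j, ((π j : ℂ) * w b + zperp i (j, b)) :=
            Finset.sum_congr rfl fun j _ => hz j
      _ = (∑ j, (π j : ℂ) * w b) + ∑ j, zperp i (j, b) := Finset.sum_add_distrib
      _ = (∑ j, (π j : ℂ)) * w b + 0 := by rw [hperpcol i b, Finset.sum_mul]
      _ = w b := by
          rw [← Complex.ofReal_sum, hπsum, Complex.ofReal_one, one_mul, add_zero]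
    funext p
    rw [hw p, hWw p.2]
  have haW : ∀ i : ℕ, piNormKron π (zpar i) = en (W i) := by
    intro i
    rw [hzpar' i]
    exact pn_pi_tensor hπpos hπsum (W i)
  -- abbreviations
  set a : ℕ → ℝ := fun j => piNormKron π (zpar j) with hadef
  set bb : ℕ → ℝ := fun j => piNormKron π (zperp j) with hbbdef
  have ha0 : ∀ j, 0 ≤ a j := fun j => pn_nonneg _
  have hbb0 : ∀ j, 0 ≤ bb j := fun j => pn_nonneg _
  have hb0 : bb 0 = 0 := by rw [hbbdef]; simp only; rw [hz0perp]; exact pn_zero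
  -- main recurrences
  have hkey : ∀ j : ℕ,
      a (j + 1) ≤ (eL - t * ℓ) * a j + (eL - 1) * bb j ∧
      bb (j + 1) ≤ lam * eL * bb j + lam * (eL - 1) * a j := by
    intro j
    set y : Fin N × Fin m → ℂ := (blockDiag' fun v => mexp ((t : ℂ) • H v))ᴴ *ᵥ z j with hydef
    set u : Fin N → Fin m → ℂ := fun v b => zperp j (v, b) with hudef
    set A' : Fin N × Fin m → ℂ := fun p => (π p.1 : ℂ) * ((M p.1)ᴴ *ᵥ W j) p.2 with hA'def
    set B' : Fin N × Fin m → ℂ := fun p => ((M p.1)ᴴ *ᵥ u p.1) p.2 with hB'def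
    have hzsplit : ∀ v : Fin N, (fun b' => z j (v, b')) = (π v : ℂ) • W j + u v := by
      intro v
      funext b'
      rw [hdec j]
      simp only [Pi.add_apply, Pi.smul_apply, smul_eq_mul, hudef]
      rw [hzpar' j]
    have hyAB : y = fun p => A' p + B' p := by
      funext p
      obtain ⟨v, b⟩ := p
      rw [hydef]
      rw [blockDiag'_conjT_mulVec (fun v => mexp ((t : ℂ) • H v)) (z j) v b]
      rw [hzsplit v]
      rw [Matrix.mulVec_add, Matrix.mulVec_smul]
      simp only [Pi.add_apply, Pi.smul_apply, smul_eq_mul]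
      rfl
    -- column sums
    have hcolA : ∀ b, ∑ v, A' (v, b) = (∑ v, (π v : ℂ) * ((M v)ᴴ *ᵥ W j) b) := by
      intro b; rfl
    have hcolsumy : ∀ b, ∑ v, y (v, b) = (∑ v, A' (v, b)) + ∑ v, B' (v, b) := by
      intro b
      rw [hyAB]
      exact Finset.sum_add_distrib
    have hWsucc : ∀ b, W (j + 1) b = (∑ v, A' (v, b)) + ∑ v, B' (v, b) := by
      intro b
      rw [hWdef]
      simp only
      rw [Finset.sum_congr rfl fun k _ => by rw [hrec j]]
      rw [colsum_kron_mulVec hProw y b, ← hcolsumy b]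
    -- bound on the A'-column sums
    have henA : en (fun b => ∑ v, A' (v, b)) ≤ (eL - t * ℓ) * en (W j) := by
      have hsplitA : (fun b => ∑ v, A' (v, b))
          = (∑ v, fun b => (π v : ℂ) * (((M v)ᴴ - 1 - ((t : ℂ) • H v)ᴴ) *ᵥ W j) b) + W j := by
        funext b
        simp only [Pi.add_apply, Finset.sum_apply]
        have hterm : ∀ v : Fin N, A' (v, b)
            = (π v : ℂ) * (((M v)ᴴ - 1 - ((t : ℂ) • H v)ᴴ) *ᵥ W j) b
              + (π v : ℂ) * W j b + (π v : ℂ) * (((t : ℂ) • H v)ᴴ *ᵥ W j) b := by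
          intro v
          rw [hA'def]
          simp only
          rw [show ((M v)ᴴ *ᵥ W j) b
              = (((M v)ᴴ - 1 - ((t : ℂ) • H v)ᴴ) *ᵥ W j) b + W j b
                + (((t : ℂ) • H v)ᴴ *ᵥ W j) b by
            rw [Matrix.sub_mulVec, Matrix.sub_mulVec, Matrix.one_mulVec]
            simp only [Pi.sub_apply]
            ring]
          ring
        rw [Finset.sum_congr rfl fun v _ => hterm v]
        rw [Finset.sum_add_distrib, Finset.sum_add_distrib]
        have hz1 : ∑ v, (π v : ℂ) * W j b = W j b := by
          rw [← Finset.sum_mul, ← Complex.ofReal_sum, hπsum, Complex.ofReal_one, one_mul]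
        have hz2 : ∑ v, (π v : ℂ) * (((t : ℂ) • H v)ᴴ *ᵥ W j) b = 0 := by
          have : ∀ v : Fin N, (π v : ℂ) * (((t : ℂ) • H v)ᴴ *ᵥ W j) b
              = (((π v : ℂ) • ((t : ℂ) • H v)ᴴ) *ᵥ W j) b := by
            intro v
            rw [Matrix.smul_mulVec]
            simp
          rw [Finset.sum_congr rfl fun v _ => this v]
          rw [show ∑ v, (((π v : ℂ) • ((t : ℂ) • H v)ᴴ) *ᵥ W j) b
              = ((∑ v, (π v : ℂ) • ((t : ℂ) • H v)ᴴ) *ᵥ W j) b by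
            simp only [Matrix.mulVec, dotProduct, Matrix.sum_apply, Finset.sum_mul]
            rw [Finset.sum_comm]]
          rw [hmean']
          simp [Matrix.zero_mulVec]
        rw [hz1, hz2, add_zero]
      rw [hsplitA]
      calc en ((∑ v, fun b => (π v : ℂ) * (((M v)ᴴ - 1 - ((t : ℂ) • H v)ᴴ) *ᵥ W j) b) + W j)
          ≤ en (∑ v, fun b => (π v : ℂ) * (((M v)ᴴ - 1 - ((t : ℂ) • H v)ᴴ) *ᵥ W j) b)
            + en (W j) := en_add_le _ _
      _ ≤ (∑ v, en (fun b => (π v : ℂ) * (((M v)ᴴ - 1 - ((t : ℂ) • H v)ᴴ) *ᵥ W j) b))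
            + en (W j) := by
          have := en_sum_le Finset.univ
            (fun v => fun b => (π v : ℂ) * (((M v)ᴴ - 1 - ((t : ℂ) • H v)ᴴ) *ᵥ W j) b)
          linarith
      _ ≤ (∑ v, π v * ((eL - 1 - t * ℓ) * en (W j))) + en (W j) := by
          have hv : ∀ v : Fin N, en (fun b => (π v : ℂ) * (((M v)ᴴ - 1 - ((t : ℂ) • H v)ᴴ) *ᵥ W j) b)
              ≤ π v * ((eL - 1 - t * ℓ) * en (W j)) := by
            intro v
            have h1 : (fun b => (π v : ℂ) * (((M v)ᴴ - 1 - ((t : ℂ) • H v)ᴴ) *ᵥ W j) b)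
                = (π v : ℂ) • (((M v)ᴴ - 1 - ((t : ℂ) • H v)ᴴ) *ᵥ W j) := by
              funext b; simp
            rw [h1, en_smul]
            have h2 : ‖((π v : ℝ) : ℂ)‖ = π v := by
              rw [Complex.norm_real, Real.norm_eq_abs, abs_of_pos (hπpos v)]
            rw [h2]
            exact mul_le_mul_of_nonneg_left (hM3 v (W j)) (hπpos v).le
          have := Finset.sum_le_sum fun v (_ : v ∈ Finset.univ) => hv v
          linarith
      _ = (eL - t * ℓ) * en (W j) := by
          rw [← Finset.sum_mul, hπsum, one_mul]
          ring
    -- bound on the B'-column sums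
    have henB : en (fun b => ∑ v, B' (v, b)) ≤ (eL - 1) * bb j := by
      have husum : ∀ b, ∑ v, u v b = 0 := fun b => hperpcol j b
      have hsplitB : (fun b => ∑ v, B' (v, b))
          = ∑ v, fun b => (((M v)ᴴ - 1) *ᵥ u v) b := by
        funext b
        simp only [Finset.sum_apply]
        have hterm : ∀ v : Fin N, B' (v, b) = (((M v)ᴴ - 1) *ᵥ u v) b + u v b := by
          intro v
          rw [hB'def]
          simp only
          rw [Matrix.sub_mulVec, Matrix.one_mulVec]
          simp only [Pi.sub_apply]
          ring
        rw [Finset.sum_congr rfl fun v _ => hterm v, Finset.sum_add_distrib, husum b, add_zero]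
      rw [hsplitB]
      calc en (∑ v, fun b => (((M v)ᴴ - 1) *ᵥ u v) b)
          ≤ ∑ v, en (fun b => (((M v)ᴴ - 1) *ᵥ u v) b) := en_sum_le _ _
      _ ≤ ∑ v, (eL - 1) * en (u v) := Finset.sum_le_sum fun v _ => hM2 v (u v)
      _ = (eL - 1) * ∑ v, en (u v) := by rw [Finset.mul_sum]
      _ ≤ (eL - 1) * bb j := by
          have h1 : ∑ v, en (u v) ≤ piNormKron π (zperp j) := by
            have := sum_row_en_le hπpos hπsum (zperp j)
            exact this
          have h2 : (0:ℝ) ≤ eL - 1 := by rw [heLdef]; linarith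
          rw [hbbdef]
          exact mul_le_mul_of_nonneg_left h1 h2
    -- R1
    have hR1 : a (j + 1) ≤ (eL - t * ℓ) * a j + (eL - 1) * bb j := by
      have h1 : a (j + 1) = en (W (j + 1)) := haW (j + 1)
      have h2 : W (j + 1) = (fun b => ∑ v, A' (v, b)) + fun b => ∑ v, B' (v, b) := by
        funext b
        rw [hWsucc b]
        rfl
      rw [h1, h2]
      calc en ((fun b => ∑ v, A' (v, b)) + fun b => ∑ v, B' (v, b))
          ≤ en (fun b => ∑ v, A' (v, b)) + en (fun b => ∑ v, B' (v, b)) := en_add_le _ _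
      _ ≤ (eL - t * ℓ) * en (W j) + (eL - 1) * bb j := add_le_add henA henB
      _ = (eL - t * ℓ) * a j + (eL - 1) * bb j := by rw [← haW j]
    -- R2
    have hR2 : bb (j + 1) ≤ lam * eL * bb j + lam * (eL - 1) * a j := by
      -- zperp (j+1) = P̃ᵀ (y - π ⊗ colsum y)
      have hcW : ∀ b, ∑ k, y (k, b) = W (j + 1) b := by
        intro b
        rw [hWsucc b, hcolsumy b]
      have hzperp_eq : zperp (j + 1)
          = ((P.map Complex.ofReal) ⊗ₖ (1 : Matrix (Fin m) (Fin m) ℂ))ᵀ *ᵥ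
            (fun p => y p - (π p.1 : ℂ) * (∑ k, y (k, p.2))) := by
        have hsub : (fun p : Fin N × Fin m => y p - (π p.1 : ℂ) * (∑ k, y (k, p.2)))
            = y - fun p => (π p.1 : ℂ) * W (j + 1) p.2 := by
          funext p
          simp only [Pi.sub_apply]
          rw [hcW p.2]
        rw [hsub, Matrix.mulVec_sub]
        rw [kron_mulVec_stationary hπstat (W (j + 1))]
        have hz' : ((P.map Complex.ofReal) ⊗ₖ (1 : Matrix (Fin m) (Fin m) ℂ))ᵀ *ᵥ y
            = z (j + 1) := (hrec j).symm
        rw [hz']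
        have : zpar (j + 1) = fun p => (π p.1 : ℂ) * W (j + 1) p.2 := hzpar' (j + 1)
        rw [← this]
        funext p
        simp only [Pi.sub_apply]
        rw [hdec (j + 1)]
        simp
      have hyperpcol : ∀ b, ∑ k, (y (k, b) - (π k : ℂ) * (∑ k', y (k', b))) = 0 := by
        intro b
        rw [Finset.sum_sub_distrib, ← Finset.sum_mul, ← Complex.ofReal_sum, hπsum,
          Complex.ofReal_one, one_mul, sub_self]
      have hstep1 : bb (j + 1) ≤ lam * piNormKron π
          (fun p => y p - (π p.1 : ℂ) * (∑ k, y (k, p.2))) := by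
        rw [hbbdef]
        simp only
        rw [hzperp_eq]
        exact spec_kron ⟨hPnn, hProw⟩ ⟨hπpos, hπsum, hπstat⟩ _ (fun b => hyperpcol b)
      -- decompose the perp of y
      have hyperp_split : (fun p : Fin N × Fin m => y p - (π p.1 : ℂ) * (∑ k, y (k, p.2)))
          = (fun p => A' p - (π p.1 : ℂ) * (∑ k, A' (k, p.2)))
            + fun p => B' p - (π p.1 : ℂ) * (∑ k, B' (k, p.2)) := by
        funext p
        simp only [Pi.add_apply]
        rw [hyAB]
        simp only
        rw [show ∑ k, (A' (k, p.2) + B' (k, p.2))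
            = (∑ k, A' (k, p.2)) + ∑ k, B' (k, p.2) from Finset.sum_add_distrib]
        ring
      have hperpB : piNormKron π (fun p => B' p - (π p.1 : ℂ) * (∑ k, B' (k, p.2)))
          ≤ eL * bb j := by
        calc piNormKron π (fun p => B' p - (π p.1 : ℂ) * (∑ k, B' (k, p.2)))
            ≤ piNormKron π B' := pn_perp_le hπpos hπsum B'
        _ ≤ eL * bb j := by
            rw [pn_rows (π := π) B', hbbdef]
            simp only
            rw [pn_rows (π := π) (zperp j)]
            have hterm : ∀ v : Fin N, en (fun b => B' (v, b)) ^ 2 / π v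
                ≤ eL ^ 2 * (en (fun b => zperp j (v, b)) ^ 2 / π v) := by
              intro v
              have h1 : en (fun b => B' (v, b)) ≤ eL * en (u v) := hM1 v (u v)
              have h2 : en (fun b => zperp j (v, b)) = en (u v) := rfl
              rw [h2]
              rw [div_le_iff₀ (hπpos v)]
              have h3 : 0 ≤ en (fun b => B' (v, b)) := en_nonneg _
              have h4 : 0 ≤ en (u v) := en_nonneg _
              have h5 : 0 ≤ eL := by rw [heLdef]; positivity
              have h6 : en (fun b => B' (v, b)) ^ 2 ≤ (eL * en (u v)) ^ 2 := by nlinarith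
              calc en (fun b => B' (v, b)) ^ 2 ≤ (eL * en (u v)) ^ 2 := h6
              _ = eL ^ 2 * (en (u v) ^ 2 / π v) * π v := by
                  have hne : π v ≠ 0 := (hπpos v).ne'
                  field_simp
            calc Real.sqrt (∑ v, en (fun b => B' (v, b)) ^ 2 / π v)
                ≤ Real.sqrt (∑ v, eL ^ 2 * (en (fun b => zperp j (v, b)) ^ 2 / π v)) :=
                  Real.sqrt_le_sqrt (Finset.sum_le_sum fun v _ => hterm v)
            _ = eL * Real.sqrt (∑ v, en (fun b => zperp j (v, b)) ^ 2 / π v) := by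
                rw [← Finset.mul_sum, Real.sqrt_mul (sq_nonneg _),
                  Real.sqrt_sq (by rw [heLdef]; positivity)]
      have hperpA : piNormKron π (fun p => A' p - (π p.1 : ℂ) * (∑ k, A' (k, p.2)))
          ≤ (eL - 1) * a j := by
        set D : Fin N × Fin m → ℂ := fun p => (π p.1 : ℂ) * ((((M p.1)ᴴ - 1) *ᵥ W j) p.2)
          with hDdef
        have hAD : ∀ (k : Fin N) (b : Fin m), A' (k, b) = D (k, b) + (π k : ℂ) * W j b := by
          intro k b
          rw [hA'def, hDdef]
          simp only
          rw [Matrix.sub_mulVec, Matrix.one_mulVec]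
          simp only [Pi.sub_apply]
          ring
        have hcolD : ∀ b, ∑ k, A' (k, b) = (∑ k, D (k, b)) + W j b := by
          intro b
          rw [Finset.sum_congr rfl fun k _ => hAD k b, Finset.sum_add_distrib]
          have hz1 : ∑ k, (π k : ℂ) * W j b = W j b := by
            rw [← Finset.sum_mul, ← Complex.ofReal_sum, hπsum, Complex.ofReal_one, one_mul]
          rw [hz1]
        have hAeq : (fun p : Fin N × Fin m => A' p - (π p.1 : ℂ) * (∑ k, A' (k, p.2)))
            = fun p => D p - (π p.1 : ℂ) * (∑ k, D (k, p.2)) := by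
          funext p
          obtain ⟨k, b⟩ := p
          rw [hAD k b, hcolD b]
          ring
        rw [hAeq]
        calc piNormKron π (fun p => D p - (π p.1 : ℂ) * (∑ k, D (k, p.2)))
            ≤ piNormKron π D := pn_perp_le hπpos hπsum D
        _ ≤ (eL - 1) * a j := by
            rw [hDdef]
            rw [pn_pi_rowscale hπpos (fun v => ((M v)ᴴ - 1) *ᵥ W j)]
            have h2 : (0:ℝ) ≤ eL - 1 := by rw [heLdef]; linarith
            calc Real.sqrt (∑ v, π v * en (((M v)ᴴ - 1) *ᵥ W j) ^ 2)
                ≤ Real.sqrt (∑ v, π v * ((eL - 1) * en (W j)) ^ 2) := by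
                  apply Real.sqrt_le_sqrt
                  refine Finset.sum_le_sum fun v _ => ?_
                  have h1 := hM2 v (W j)
                  have h3 : 0 ≤ en (((M v)ᴴ - 1) *ᵥ W j) := en_nonneg _
                  have h4 : 0 ≤ (eL - 1) * en (W j) :=
                    mul_nonneg h2 (en_nonneg _)
                  have : en (((M v)ᴴ - 1) *ᵥ W j) ^ 2 ≤ ((eL - 1) * en (W j)) ^ 2 := by
                    nlinarith
                  exact mul_le_mul_of_nonneg_left this (hπpos v).le
            _ = (eL - 1) * a j := by
                rw [← Finset.sum_mul, hπsum, one_mul, Real.sqrt_sq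
                  (mul_nonneg h2 (en_nonneg _)), ← haW j]
      calc bb (j + 1) ≤ lam * piNormKron π
            (fun p => y p - (π p.1 : ℂ) * (∑ k, y (k, p.2))) := hstep1
      _ ≤ lam * ((eL - 1) * a j + eL * bb j) := by
          apply mul_le_mul_of_nonneg_left _ hlam0
          rw [hyperp_split]
          calc piNormKron π ((fun p => A' p - (π p.1 : ℂ) * (∑ k, A' (k, p.2)))
                + fun p => B' p - (π p.1 : ℂ) * (∑ k, B' (k, p.2)))
              ≤ piNormKron π (fun p => A' p - (π p.1 : ℂ) * (∑ k, A' (k, p.2)))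
                + piNormKron π (fun p => B' p - (π p.1 : ℂ) * (∑ k, B' (k, p.2))) :=
                pn_add_le hπpos _ _
          _ ≤ (eL - 1) * a j + eL * bb j := add_le_add hperpA hperpB
      _ = lam * eL * bb j + lam * (eL - 1) * a j := by ring
    exact ⟨hR1, hR2⟩
  -- final induction
  have hs0 : (0:ℝ) ≤ eL - 1 := by rw [heLdef]; linarith
  have hq0 : 0 ≤ lam * eL := mul_nonneg hlam0 (by rw [heLdef]; positivity)
  have h1q : 0 < 1 - lam * eL := by linarith
  have hr0 : 0 ≤ lam * (eL - 1) := mul_nonneg hlam0 hs0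
  have hMsup : ∀ i : ℕ, ∀ hi : 1 ≤ i, ∀ j < i,
      a j ≤ (Finset.range i).sup' (Finset.nonempty_range_iff.mpr (by omega)) a := by
    intro i hi j hj
    exact Finset.le_sup' a (Finset.mem_range.mpr hj)
  have hMsup_mono : ∀ i : ℕ, ∀ hi : 1 ≤ i,
      (Finset.range i).sup' (Finset.nonempty_range_iff.mpr (by omega)) a
        ≤ (Finset.range (i+1)).sup' (Finset.nonempty_range_iff.mpr (by omega)) a := by
    intro i hi
    exact Finset.sup'_mono a (Finset.range_subset_range.mpr (by omega)) _
  have hMsup_nonneg : ∀ i : ℕ, ∀ hi : 1 ≤ i,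
      0 ≤ (Finset.range i).sup' (Finset.nonempty_range_iff.mpr (by omega)) a := by
    intro i hi
    exact le_trans (ha0 0) (hMsup i hi 0 (by omega))
  -- claim: bb (j+1) bounded via sup of a
  have hclaim : ∀ j : ℕ, bb (j + 1) ≤ (lam * (eL - 1) / (1 - lam * eL)) *
      (Finset.range (j + 1)).sup' (Finset.nonempty_range_iff.mpr (Nat.succ_ne_zero j)) a := by
    intro j
    induction j with
    | zero =>
      have h := (hkey 0).2
      rw [hb0] at h
      have h' : bb 1 ≤ lam * (eL - 1) * a 0 := by linarith
      have hsup : (Finset.range 1).sup' (Finset.nonempty_range_iff.mpr (Nat.succ_ne_zero 0)) a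
          = a 0 := rfl
      rw [hsup]
      calc bb 1 ≤ lam * (eL - 1) * a 0 := h'
      _ ≤ lam * (eL - 1) / (1 - lam * eL) * a 0 := by
          apply mul_le_mul_of_nonneg_right _ (ha0 0)
          rw [le_div_iff₀ h1q]
          nlinarith [mul_nonneg hr0 hq0]
    | succ j ih =>
      have h := (hkey (j + 1)).2
      set Mj := (Finset.range (j + 1)).sup'
        (Finset.nonempty_range_iff.mpr (Nat.succ_ne_zero j)) a with hMj
      set Mj1 := (Finset.range (j + 2)).sup'
        (Finset.nonempty_range_iff.mpr (Nat.succ_ne_zero (j + 1))) a with hMj1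
      have hmono : Mj ≤ Mj1 :=
        Finset.sup'_mono a (Finset.range_subset_range.mpr (by omega)) _
      have haj : a (j + 1) ≤ Mj1 := Finset.le_sup' a (Finset.mem_range.mpr (by omega))
      have hMj1nn : 0 ≤ Mj1 := le_trans (ha0 0)
        (Finset.le_sup' a (Finset.mem_range.mpr (by omega)))
      calc bb (j + 2) ≤ lam * eL * bb (j + 1) + lam * (eL - 1) * a (j + 1) := h
      _ ≤ lam * eL * (lam * (eL - 1) / (1 - lam * eL) * Mj1)
            + lam * (eL - 1) * Mj1 := by
          apply add_le_add
          · apply mul_le_mul_of_nonneg_left _ hq0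
            calc bb (j + 1) ≤ lam * (eL - 1) / (1 - lam * eL) * Mj := ih
            _ ≤ lam * (eL - 1) / (1 - lam * eL) * Mj1 := by
                apply mul_le_mul_of_nonneg_left hmono
                exact div_nonneg hr0 h1q.le
          · exact mul_le_mul_of_nonneg_left haj hr0
      _ = lam * (eL - 1) / (1 - lam * eL) * Mj1 := by
          field_simp
          ring
  -- conclusion
  intro i hi
  obtain ⟨j, rfl⟩ : ∃ j, i = j + 1 := ⟨i - 1, by omega⟩
  have hC0 : 0 ≤ lam * (eL - 1) ^ 2 / (1 - lam * eL) :=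
    div_nonneg (mul_nonneg hlam0 (sq_nonneg _)) h1q.le
  have hkey1 := (hkey j).1
  set C := (eL - t * ℓ) + lam * (eL - 1) ^ 2 / (1 - lam * eL) with hCdef
  set Mj1 := (Finset.range (j+1)).sup' (Finset.nonempty_range_iff.mpr (by omega)) a with hMj1
  have haj : a j ≤ Mj1 := hMsup (j+1) (by omega) j (by omega)
  have hMj1nn : 0 ≤ Mj1 := hMsup_nonneg (j+1) (by omega)
  have hc1 : (0:ℝ) ≤ eL - t * ℓ := by rw [heLdef]; linarith
  rcases j with _ | k
  · have hkey0 := (hkey 0).1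
    rw [hb0, mul_zero, add_zero] at hkey0
    calc a 1 ≤ (eL - t * ℓ) * a 0 := hkey0
    _ ≤ (eL - t * ℓ) * Mj1 := mul_le_mul_of_nonneg_left haj hc1
    _ ≤ C * Mj1 := by
        apply mul_le_mul_of_nonneg_right _ hMj1nn
        rw [hCdef]
        linarith
  · have hbk := hclaim k
    set Mj := (Finset.range (k + 1)).sup'
      (Finset.nonempty_range_iff.mpr (Nat.succ_ne_zero k)) a with hMj
    have hmono : Mj ≤ Mj1 :=
      Finset.sup'_mono a (Finset.range_subset_range.mpr (by omega)) _
    calc a (k + 1 + 1) ≤ (eL - t * ℓ) * a (k + 1) + (eL - 1) * bb (k + 1) := hkey1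
    _ ≤ (eL - t * ℓ) * Mj1 + (eL - 1) * (lam * (eL - 1) / (1 - lam * eL) * Mj1) := by
        apply add_le_add
        · exact mul_le_mul_of_nonneg_left haj hc1
        · apply mul_le_mul_of_nonneg_left _ hs0
          calc bb (k + 1) ≤ lam * (eL - 1) / (1 - lam * eL) * Mj := hbk
          _ ≤ lam * (eL - 1) / (1 - lam * eL) * Mj1 :=
              mul_le_mul_of_nonneg_left hmono (div_nonneg hr0 h1q.le)
    _ = C * Mj1 := by
        rw [hCdef]
        field_simp
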